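/- Let P be a path with a distinguished vertex r, and suppose every 2-respecting interval cut of P not containing r has weight ≥ (1+ε)λ (with respect to a posi-modular cut weight function). Then the number of 2-respecting interval cuts of P with weight < (1+ε)λ is at most |E(P)|. -/

import Mathlib

/-- On a path with `L` edges (edge `i` joining vertices `i` and `i+1`), an interval
`[a, b]` of two deleted edges `a < b` induces the middle cut `Icc (a+1) b`, with weight
given by a posi-modular cut function `f`.  If every interval cut not containing the
distinguished vertex `r` has weight at least `(1+ε)λ`, then the number of interval cuts
with weight less than `(1+ε)λ` is at most `|E(P)| = L`. -/
theorem path_small_cuts_linear (L r : ℕ) (ε lam : ℝ) (hε : 0 < ε) (hlam : 0 < lam)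
    (f : Finset ℕ → ℝ)
    (hposi : ∀ X Y : Finset ℕ, f (X \ Y) + f (Y \ X) ≤ f X + f Y)
    (hside : ∀ a b : ℕ, a < b → b < L → ¬(a < r ∧ r ≤ b) →
      (1 + ε) * lam ≤ f (Finset.Icc (a + 1) b)) :
    ((Finset.range L ×ˢ Finset.range L).filter fun p =>
        p.1 < p.2 ∧ f (Finset.Icc (p.1 + 1) p.2) < (1 + ε) * lam).card ≤ L := by
  set S := (Finset.range L ×ˢ Finset.range L).filter fun p =>
        p.1 < p.2 ∧ f (Finset.Icc (p.1 + 1) p.2) < (1 + ε) * lam with hS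
  have hmem : ∀ p ∈ S, p.1 < p.2 ∧ p.2 < L ∧ f (Finset.Icc (p.1 + 1) p.2) < (1 + ε) * lam := by
    intro p hp
    simp only [hS, Finset.mem_filter, Finset.mem_product, Finset.mem_range] at hp
    exact ⟨hp.2.1, hp.1.2, hp.2.2⟩
  have hcontain : ∀ p ∈ S, p.1 < r ∧ r ≤ p.2 := by
    intro p hp
    obtain ⟨h1, h2, h3⟩ := hmem p hp
    by_contra hc
    exact absurd (hside p.1 p.2 h1 h2 hc) (not_le.mpr h3)
  -- Forbidden pattern: no two small cuts strictly nested in both coordinates.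
  have hpat : ∀ p ∈ S, ∀ q ∈ S, ¬(p.1 < q.1 ∧ p.2 < q.2) := by
    intro p hp q hq ⟨hx, hy⟩
    obtain ⟨hp1, hp2, hp3⟩ := hmem p hp
    obtain ⟨hq1, hq2, hq3⟩ := hmem q hq
    obtain ⟨hpr1, hpr2⟩ := hcontain p hp
    obtain ⟨hqr1, hqr2⟩ := hcontain q hq
    have hX : Finset.Icc (p.1 + 1) p.2 \ Finset.Icc (q.1 + 1) q.2
        = Finset.Icc (p.1 + 1) q.1 := by
      ext x; simp only [Finset.mem_sdiff, Finset.mem_Icc]; omega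
    have hY : Finset.Icc (q.1 + 1) q.2 \ Finset.Icc (p.1 + 1) p.2
        = Finset.Icc (p.2 + 1) q.2 := by
      ext x; simp only [Finset.mem_sdiff, Finset.mem_Icc]; omega
    have h1 : (1 + ε) * lam ≤ f (Finset.Icc (p.1 + 1) q.1) :=
      hside p.1 q.1 hx (by omega) (by omega)
    have h2 : (1 + ε) * lam ≤ f (Finset.Icc (p.2 + 1) q.2) :=
      hside p.2 q.2 hy hq2 (by omega)
    have := hposi (Finset.Icc (p.1 + 1) p.2) (Finset.Icc (q.1 + 1) q.2)
    rw [hX, hY] at this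
    linarith
  have : S.card ≤ (Finset.range L).card := by
    apply Finset.card_le_card_of_injOn (fun p => p.1 + (L - 1 - p.2))
    · intro p hp
      obtain ⟨h1, h2, _⟩ := hmem p hp
      simp only [Finset.coe_range, Set.mem_Iio, Finset.mem_coe, Finset.mem_range]
      omega
    · intro p hp q hq hpq
      obtain ⟨hp1, hp2, _⟩ := hmem p hp
      obtain ⟨hq1, hq2, _⟩ := hmem q hq
      have n1 := hpat p hp q hq
      have n2 := hpat q hq p hp
      simp only at hpq
      have : p.1 = q.1 ∧ p.2 = q.2 := by omega
      exact Prod.ext this.1 this.2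
  simpa using this
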